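/- Let Z be a random variable, ℓ(w; z) ≥ 0 a loss, α ∈ (0,1), and define f_α(w, v; z) = v + (1/α)·max(ℓ(w; z) − v, 0) with F_α(w, v) = E[f_α(w, v; Z)]. If the CDF of ℓ(w; Z) is continuous, then min over v ∈ ℝ of F_α(w, v) equals C_α(w) = (1/α)·E[ℓ(w;Z)·1{ℓ(w;Z) ≥ v_α(w)}], and the minimum is attained at v = v_α(w). -/

import Mathlib

open MeasureTheory ProbabilityTheory Real

/-- Rockafellar–Uryasev: for a fixed `w`, with `f_α(w,v;z) = v + (1/α)[ℓ(w;z)-v]₊`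
and `F_α(w,v) = E f_α(w,v;Z)`, if the CDF of `ℓ(w;Z)` is continuous then
`min_v F_α(w,v) = C_α(w)`, attained at `v = v_α(w)`. -/
theorem rockafellar_uryasev_cvar {Ω 𝒵 W : Type*} [MeasurableSpace Ω]
    (μ : Measure Ω) [IsProbabilityMeasure μ]
    (Z : Ω → 𝒵) (ℓ : W → 𝒵 → ℝ) (w : W)
    (hlossnonneg : ∀ w' z, 0 ≤ ℓ w' z)
    (hmeas : Measurable (fun ω => ℓ w (Z ω)))
    (hint : Integrable (fun ω => ℓ w (Z ω)) μ)
    (α : ℝ) (hα0 : 0 < α) (hα1 : α < 1)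
    (F : ℝ → ℝ) (hF : ∀ u, F u = (μ {ω | ℓ w (Z ω) ≤ u}).toReal)
    (hFcont : Continuous F)
    (vα : ℝ) (hvα : vα = sInf {u : ℝ | 1 - α ≤ F u})
    (Fα : ℝ → ℝ)
    (hFα : ∀ v, Fα v = ∫ ω, (v + (1/α) * max (ℓ w (Z ω) - v) 0) ∂μ)
    (Cα : ℝ)
    (hCα : Cα = (1/α) * ∫ ω, (if vα ≤ ℓ w (Z ω) then ℓ w (Z ω) else 0) ∂μ) :
    (∀ v : ℝ, Fα vα ≤ Fα v) ∧ Fα vα = Cα := by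
  set X : Ω → ℝ := fun ω => ℓ w (Z ω) with hXdef
  set ν : Measure ℝ := μ.map X with hνdef
  have hνprob : IsProbabilityMeasure ν := Measure.isProbabilityMeasure_map hmeas.aemeasurable
  have hFcdf : ∀ u, F u = cdf ν u := by
    intro u
    rw [hF u, cdf_eq_real, measureReal_def, hνdef, Measure.map_apply hmeas measurableSet_Iic]
    rfl
  have hFeq : (fun u => cdf ν u) = F := funext fun u => (hFcdf u).symm
  have hαpos : (0:ℝ) < 1/α := by positivity
  -- the set defining vα
  set S : Set ℝ := {u : ℝ | 1 - α ≤ F u} with hSdef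
  have hS_ne : S.Nonempty := by
    have h1 : (1:ℝ) - α < 1 := by linarith
    have := (tendsto_cdf_atTop ν).eventually (eventually_ge_nhds h1)
    rw [Filter.eventually_atTop] at this
    obtain ⟨M, hM⟩ := this
    exact ⟨M, by rw [hSdef, Set.mem_setOf_eq, hFcdf M]; exact hM M le_rfl⟩
  have hS_bdd : BddBelow S := by
    have h0 : (0:ℝ) < 1 - α := by linarith
    have := (tendsto_cdf_atBot ν).eventually (eventually_lt_nhds h0)
    rw [Filter.eventually_atBot] at this
    obtain ⟨M, hM⟩ := this
    refine ⟨M, fun u hu => ?_⟩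
    by_contra h
    push_neg at h
    have := hM u h.le
    rw [← hFcdf u] at this
    exact absurd hu (by simp [hSdef, Set.mem_setOf_eq]; linarith)
  have hS_closed : IsClosed S := isClosed_le continuous_const hFcont
  have hmem : vα ∈ S := hvα ▸ hS_closed.csInf_mem hS_ne hS_bdd
  have hFvα : F vα = 1 - α := by
    refine le_antisymm ?_ hmem
    have hlt : ∀ u < vα, F u < 1 - α := by
      intro u hu
      by_contra h
      push_neg at h
      exact absurd (hvα ▸ csInf_le hS_bdd h) (not_le.mpr hu)
    have htends : Filter.Tendsto F (nhdsWithin vα (Set.Iio vα)) (nhds (F vα)) :=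
      (hFcont.tendsto vα).mono_left nhdsWithin_le_nhds
    refine le_of_tendsto htends ?_
    filter_upwards [self_mem_nhdsWithin] with u hu
    exact (hlt u hu).le
  -- the singleton has measure zero
  have hν_single : ν {vα} = 0 := by
    have hcont : Continuous (cdf ν) := by
      have h : ⇑(cdf ν) = F := funext fun u => (hFcdf u).symm
      rw [h]; exact hFcont
    have hleft : Function.leftLim (cdf ν) vα = cdf ν vα := by
      apply leftLim_eq_of_tendsto
      exact (hcont.tendsto vα).mono_left nhdsWithin_le_nhds
    rw [← measure_cdf ν, StieltjesFunction.measure_singleton, hleft, sub_self,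
      ENNReal.ofReal_zero]
  have hμ_single : μ {ω | X ω = vα} = 0 := by
    have : {ω | X ω = vα} = X ⁻¹' {vα} := by ext ω; simp
    rw [this, ← Measure.map_apply hmeas (measurableSet_singleton vα)]
    exact hν_single
  -- the upper tail set
  set A : Set Ω := {ω | vα ≤ X ω} with hAdef
  have hAm : MeasurableSet A := measurableSet_le measurable_const hmeas
  have hμA : (μ A).toReal = α := by
    have hsplit : A = {ω | vα < X ω} ∪ {ω | X ω = vα} := by
      ext ω
      simp only [hAdef, Set.mem_setOf_eq, Set.mem_union]
      constructor
      · intro h; rcases lt_or_eq_of_le h with h' | h'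
        · exact Or.inl h'
        · exact Or.inr h'.symm
      · rintro (h | h); exacts [h.le, h.ge]
    have hcompl : {ω | vα < X ω} = {ω | X ω ≤ vα}ᶜ := by
      ext ω; simp [not_le]
    have h1 : μ A = μ {ω | X ω ≤ vα}ᶜ := by
      have hle : μ A ≤ μ {ω | vα < X ω} := by
        rw [hsplit]
        refine le_trans (measure_union_le _ _) ?_
        simp [hμ_single]
      have hge : μ {ω | vα < X ω} ≤ μ A :=
        measure_mono (Set.setOf_subset_setOf.mpr fun ω h => le_of_lt h)
      rw [le_antisymm hle hge, hcompl]
    have h2 : (μ {ω | X ω ≤ vα}).toReal = 1 - α := by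
      rw [← hF vα]; exact hFvα
    rw [h1, measure_compl (measurableSet_le hmeas measurable_const) (measure_ne_top μ _),
      measure_univ]
    rw [ENNReal.toReal_sub_of_le prob_le_one ENNReal.one_ne_top, ENNReal.toReal_one, h2]
    ring
  -- integrability facts
  have hpos_int : ∀ v : ℝ, Integrable (fun ω => max (X ω - v) 0) μ :=
    fun v => (hint.sub (integrable_const v)).pos_part
  have hFαval : ∀ v : ℝ, Fα v = v + (1/α) * ∫ ω, max (X ω - v) 0 ∂μ := by
    intro v
    rw [hFα v]
    rw [integral_add (integrable_const v) ((hpos_int v).const_mul (1/α)),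
      integral_const, integral_const_mul]
    simp
  -- indicator functions
  have hχ_int : Integrable (fun ω => if vα ≤ X ω then (1:ℝ) else 0) μ := by
    have : (fun ω => if vα ≤ X ω then (1:ℝ) else 0) = A.indicator (fun _ => (1:ℝ)) := by
      ext ω; simp [Set.indicator_apply, hAdef, Set.mem_setOf_eq]
    rw [this]
    exact (integrable_const 1).indicator hAm
  have hχ_integral : ∫ ω, (if vα ≤ X ω then (1:ℝ) else 0) ∂μ = α := by
    have : (fun ω => if vα ≤ X ω then (1:ℝ) else 0) = A.indicator (fun _ => (1:ℝ)) := by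
      ext ω; simp [Set.indicator_apply, hAdef, Set.mem_setOf_eq]
    rw [this, integral_indicator_const _ hAm, smul_eq_mul, mul_one, measureReal_def, hμA]
  have hXind_int : Integrable (fun ω => if vα ≤ X ω then X ω else 0) μ := by
    have : (fun ω => if vα ≤ X ω then X ω else 0) = A.indicator X := by
      ext ω; simp [Set.indicator_apply, hAdef, Set.mem_setOf_eq]
    rw [this]
    exact hint.indicator hAm
  -- key pointwise identity for the equality
  have hmax_eq : (fun ω => max (X ω - vα) 0)
      = fun ω => (if vα ≤ X ω then X ω else 0) - vα * (if vα ≤ X ω then (1:ℝ) else 0) := by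
    ext ω
    by_cases h : vα ≤ X ω
    · simp [h, max_eq_left (by linarith : (0:ℝ) ≤ X ω - vα)]
    · simp [h, max_eq_right (by push_neg at h; linarith : X ω - vα ≤ (0:ℝ))]
  have hmax_integral : ∫ ω, max (X ω - vα) 0 ∂μ
      = (∫ ω, (if vα ≤ X ω then X ω else 0) ∂μ) - vα * α := by
    rw [hmax_eq, integral_sub hXind_int (hχ_int.const_mul vα), integral_const_mul, hχ_integral]
  -- the value at vα
  have hval : Fα vα = Cα := by
    rw [hFαval vα, hmax_integral, hCα]
    field_simp
    simp only [hXdef]; ring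
  refine ⟨?_, hval⟩
  -- the minimization
  intro v
  set χ : Ω → ℝ := fun ω => if vα ≤ X ω then (1:ℝ) else 0 with hχdef
  have hptwise : ∀ ω, (vα + (1/α) * max (X ω - vα) 0) + (v - vα) * (1 - (1/α) * χ ω)
      ≤ v + (1/α) * max (X ω - v) 0 := by
    intro ω
    have hm : X ω - v ≤ max (X ω - v) 0 := le_max_left _ _
    have hm0 : (0:ℝ) ≤ max (X ω - v) 0 := le_max_right _ _
    by_cases h : vα ≤ X ω
    · simp only [hχdef, if_pos h]
      rw [max_eq_left (by linarith : (0:ℝ) ≤ X ω - vα)]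
      nlinarith [mul_le_mul_of_nonneg_left hm hαpos.le]
    · simp only [hχdef, if_neg h]
      push_neg at h
      rw [max_eq_right (by linarith : X ω - vα ≤ (0:ℝ))]
      nlinarith [mul_le_mul_of_nonneg_left hm0 hαpos.le]
  have hlhs_int : Integrable
      (fun ω => (vα + (1/α) * max (X ω - vα) 0) + (v - vα) * (1 - (1/α) * χ ω)) μ := by
    refine ((integrable_const vα).add ((hpos_int vα).const_mul (1/α))).add ?_
    exact (((integrable_const 1).sub (hχ_int.const_mul (1/α))).const_mul (v - vα))
  have hrhs_int : Integrable (fun ω => v + (1/α) * max (X ω - v) 0) μ :=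
    (integrable_const v).add ((hpos_int v).const_mul (1/α))
  have hmono := integral_mono hlhs_int hrhs_int hptwise
  rw [← hFα v] at hmono
  have hf1 : Integrable (fun ω => vα + (1/α) * max (X ω - vα) 0) μ :=
    (integrable_const vα).add ((hpos_int vα).const_mul (1/α))
  have hf2 : Integrable (fun ω => (v - vα) * (1 - (1/α) * χ ω)) μ :=
    (((integrable_const 1).sub (hχ_int.const_mul (1/α))).const_mul (v - vα))
  have hlhs_val : ∫ ω, ((vα + (1/α) * max (X ω - vα) 0) + (v - vα) * (1 - (1/α) * χ ω)) ∂μ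
      = Fα vα := by
    rw [integral_add hf1 hf2]
    have h2 : ∫ ω, (v - vα) * (1 - (1/α) * χ ω) ∂μ = 0 := by
      have hg : Integrable (fun ω => (1:ℝ) - (1/α) * χ ω) μ :=
        (integrable_const 1).sub (hχ_int.const_mul (1/α))
      rw [integral_const_mul, integral_sub (integrable_const 1) (hχ_int.const_mul (1/α)),
        integral_const_mul, hχ_integral]
      simp only [integral_const, measureReal_def, measure_univ, ENNReal.toReal_one, smul_eq_mul, one_mul]
      field_simp
      ring
    rw [h2, add_zero, ← hFα vα]
  rw [hlhs_val] at hmono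
  exact hmono
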